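/- Let X be an ℕ² shift over a finite alphabet A and let a ∈ A. Then there exists a point x ∈ X such that the upper density of the set χ_a(x) = {(i,j) ∈ ℕ² : x_{i,j} = a} equals Fr_a(X), i.e., d̄(χ_a(x)) = Fr_a(X). -/

import Mathlib

set_option maxHeartbeats 1000000
set_option linter.unusedSectionVars false

open Filter

/-- `X` is an `ℕ²` shift over the alphabet `A`: a closed subset of `A ^ (ℕ×ℕ)`
invariant under the two one-sided coordinate shift maps. -/
def IsN2Shift {A : Type*} [TopologicalSpace A] (X : Set (ℕ × ℕ → A)) : Prop :=
  IsClosed X ∧ (∀ x ∈ X, (fun p : ℕ × ℕ => x (p.1 + 1, p.2)) ∈ X) ∧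
    (∀ x ∈ X, (fun p : ℕ × ℕ => x (p.1, p.2 + 1)) ∈ X)

/-- `‖x|_{[0,k₁)×[0,k₂)}‖_a`: the number of occurrences of the symbol `a`
in the restriction of `x` to the box `[0,k₁) × [0,k₂)`. -/
def occCount {A : Type*} [DecidableEq A] (x : ℕ × ℕ → A) (a : A) (k₁ k₂ : ℕ) : ℕ :=
  ((Finset.range k₁ ×ˢ Finset.range k₂).filter fun p => x p = a).card

/-- `M^a_{k₁,k₂}(X)`: the maximal number of occurrences of `a` in a `k₁ × k₂` block of `X`. -/
noncomputable def maxOcc {A : Type*} [DecidableEq A] (X : Set (ℕ × ℕ → A)) (a : A)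
    (k₁ k₂ : ℕ) : ℕ :=
  sSup {m : ℕ | ∃ x ∈ X, m = occCount x a k₁ k₂}

/-- `Fr_a(X) = inf_{k₁,k₂ ≥ 1} M^a_{k₁,k₂}(X)/(k₁·k₂)`
(by subadditivity this infimum is also the limit as `k₁,k₂ → ∞`). -/
noncomputable def freqSup {A : Type*} [DecidableEq A] (X : Set (ℕ × ℕ → A)) (a : A) : ℝ :=
  sInf {r : ℝ | ∃ k₁ k₂ : ℕ, 1 ≤ k₁ ∧ 1 ≤ k₂ ∧ r = (maxOcc X a k₁ k₂ : ℝ) / (k₁ * k₂)}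

/-- The upper density of a set `S ⊆ ℕ²`:
`limsup_{n₁,n₂ → ∞} |S ∩ ([0,n₁)×[0,n₂))| / (n₁·n₂)`. -/
noncomputable def upperDensity2 (S : Set (ℕ × ℕ)) : ℝ :=
  limsup (fun n : ℕ × ℕ =>
    ((S ∩ {p | p.1 < n.1 ∧ p.2 < n.2}).ncard : ℝ) / (n.1 * n.2)) atTop

namespace FreqProof
variable {A : Type*} [DecidableEq A]
def sq (v : ℕ × ℕ) (k l : ℕ) : Finset (ℕ × ℕ) :=
  Finset.Ico v.1 (v.1 + k) ×ˢ Finset.Ico v.2 (v.2 + l)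
def cnt (x : ℕ × ℕ → A) (a : A) (R : Finset (ℕ × ℕ)) : ℕ :=
  (R.filter fun p => x p = a).card
lemma mem_sq {v : ℕ × ℕ} {k l : ℕ} {p : ℕ × ℕ} :
    p ∈ sq v k l ↔ (v.1 ≤ p.1 ∧ p.1 < v.1 + k) ∧ v.2 ≤ p.2 ∧ p.2 < v.2 + l := by
  simp [sq, Finset.mem_product]

lemma card_sq (v : ℕ × ℕ) (k l : ℕ) : (sq v k l).card = k * l := by
  simp [sq]

lemma cnt_mono {x : ℕ × ℕ → A} {a : A} {R R' : Finset (ℕ × ℕ)} (h : R ⊆ R') :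
    cnt x a R ≤ cnt x a R' :=
  Finset.card_le_card (Finset.filter_subset_filter _ h)

lemma cnt_le_card (x : ℕ × ℕ → A) (a : A) (R : Finset (ℕ × ℕ)) : cnt x a R ≤ R.card :=
  Finset.card_le_card (Finset.filter_subset _ _)

lemma sq_zero (k l : ℕ) : sq (0, 0) k l = Finset.range k ×ˢ Finset.range l := by
  ext p
  simp [mem_sq, Finset.mem_product, Finset.mem_range]

lemma occCount_eq (x : ℕ × ℕ → A) (a : A) (k l : ℕ) :
    occCount x a k l = cnt x a (sq (0, 0) k l) := by
  rw [occCount, cnt, sq_zero]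

lemma occCount_le (x : ℕ × ℕ → A) (a : A) (k l : ℕ) : occCount x a k l ≤ k * l := by
  rw [occCount_eq]
  exact (cnt_le_card _ _ _).trans (card_sq _ _ _).le

def shiftPt (x : ℕ × ℕ → A) (u v : ℕ) : ℕ × ℕ → A := fun p => x (p.1 + u, p.2 + v)

lemma occCount_shiftPt (x : ℕ × ℕ → A) (a : A) (u v k l : ℕ) :
    occCount (shiftPt x u v) a k l = cnt x a (sq (u, v) k l) := by
  classical
  unfold occCount cnt shiftPt
  apply Finset.card_nbij' (fun p => ((p.1 + u, p.2 + v) : ℕ × ℕ))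
     (fun q => ((q.1 - u, q.2 - v) : ℕ × ℕ))
  · intro p hp
    simp only [Finset.mem_coe, Finset.mem_filter, Finset.mem_product, Finset.mem_range] at hp
    simp only [Finset.mem_coe, Finset.mem_filter, mem_sq]
    refine ⟨⟨⟨?_, ?_⟩, ?_, ?_⟩, hp.2⟩ <;> omega
  · intro q hq
    simp only [Finset.mem_coe, Finset.mem_filter, mem_sq] at hq
    obtain ⟨⟨⟨h1, h2⟩, h3, h4⟩, h5⟩ := hq
    simp only [Finset.mem_coe, Finset.mem_filter, Finset.mem_product, Finset.mem_range]
    refine ⟨⟨by omega, by omega⟩, ?_⟩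
    have he : ((q.1 - u + u : ℕ), (q.2 - v + v : ℕ)) = (q.1, q.2) := by
      simp only [Prod.mk.injEq]; omega
    simpa [he] using h5
  · intro p hp
    simp only [Prod.ext_iff]
    constructor <;> omega
  · intro q hq
    simp only [Finset.mem_coe, Finset.mem_filter, mem_sq] at hq
    obtain ⟨⟨⟨h1, _⟩, h3, _⟩, _⟩ := hq
    simp only [Prod.ext_iff]
    constructor <;> omega


-- ### chunk 2
variable [TopologicalSpace A] {X : Set (ℕ × ℕ → A)} {a : A}

lemma shiftPt_mem (hX : IsN2Shift X) {x : ℕ × ℕ → A} (hx : x ∈ X) (u v : ℕ) :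
    shiftPt x u v ∈ X := by
  have hv : ∀ v, ∀ y ∈ X, shiftPt y 0 v ∈ X := by
    intro v
    induction v with
    | zero => intro y hy; exact hy
    | succ n ih =>
      intro y hy
      have := hX.2.2 _ (ih y hy)
      have he : shiftPt y 0 (n + 1) = fun p : ℕ × ℕ => (shiftPt y 0 n) (p.1, p.2 + 1) := by
        funext p; simp [shiftPt]; ring_nf
      rw [he]; exact this
  have hu : ∀ u, ∀ y ∈ X, shiftPt y u 0 ∈ X := by
    intro u
    induction u with
    | zero => intro y hy; exact hy
    | succ n ih =>
      intro y hy
      have := hX.2.1 _ (ih y hy)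
      have he : shiftPt y (n + 1) 0 = fun p : ℕ × ℕ => (shiftPt y n 0) (p.1 + 1, p.2) := by
        funext p; simp [shiftPt]; ring_nf
      rw [he]; exact this
  have : shiftPt x u v = shiftPt (shiftPt x u 0) 0 v := by
    funext p; simp [shiftPt]
  rw [this]
  exact hv v _ (hu u x hx)

lemma bddAbove_occSet (a : A) (k l : ℕ) :
    BddAbove {m : ℕ | ∃ x ∈ X, m = occCount x a k l} := by
  refine ⟨k * l, fun m hm => ?_⟩
  obtain ⟨x, -, rfl⟩ := hm
  exact occCount_le x a k l

lemma occCount_le_maxOcc (hX : IsN2Shift X) {x : ℕ × ℕ → A} (hx : x ∈ X) (k l : ℕ) :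
    occCount x a k l ≤ maxOcc X a k l :=
  le_csSup (bddAbove_occSet a k l) ⟨x, hx, rfl⟩

lemma maxOcc_le (hne : X.Nonempty) (a : A) (k l : ℕ) : maxOcc X a k l ≤ k * l := by
  obtain ⟨x, hx⟩ := hne
  refine csSup_le ⟨_, ⟨x, hx, rfl⟩⟩ ?_
  rintro m ⟨y, -, rfl⟩
  exact occCount_le y a k l

lemma exists_maximizer (hne : X.Nonempty) (a : A) (k l : ℕ) :
    ∃ z ∈ X, occCount z a k l = maxOcc X a k l := by
  obtain ⟨x, hx⟩ := hne
  have h := Nat.sSup_mem (s := {m : ℕ | ∃ x ∈ X, m = occCount x a k l})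
    ⟨_, ⟨x, hx, rfl⟩⟩ (bddAbove_occSet a k l)
  obtain ⟨z, hz, hz2⟩ := h
  exact ⟨z, hz, hz2.symm⟩

/-- any translated window has at most `maxOcc` occurrences -/
lemma cnt_sq_le (hX : IsN2Shift X) {x : ℕ × ℕ → A} (hx : x ∈ X) (u v k l : ℕ) :
    cnt x a (sq (u, v) k l) ≤ maxOcc X a k l := by
  rw [← occCount_shiftPt]
  exact occCount_le_maxOcc hX (shiftPt_mem hX hx u v) k l

/-- covering bound: `occ(x,n₁,n₂) ≤ (n₁/k₁+1)(n₂/k₂+1) M(k₁,k₂)` -/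
lemma occCount_le_cover (hX : IsN2Shift X) {x : ℕ × ℕ → A} (hx : x ∈ X)
    {k₁ k₂ : ℕ} (hk₁ : 1 ≤ k₁) (hk₂ : 1 ≤ k₂) (n₁ n₂ : ℕ) :
    occCount x a n₁ n₂ ≤ (n₁ / k₁ + 1) * (n₂ / k₂ + 1) * maxOcc X a k₁ k₂ := by
  classical
  set q₁ := n₁ / k₁ + 1
  set q₂ := n₂ / k₂ + 1
  have hsub : sq (0, 0) n₁ n₂ ⊆
      (Finset.range q₁ ×ˢ Finset.range q₂).biUnion
        (fun ij => sq (ij.1 * k₁, ij.2 * k₂) k₁ k₂) := by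
    intro p hp
    rw [mem_sq] at hp
    rw [Finset.mem_biUnion]
    refine ⟨(p.1 / k₁, p.2 / k₂), ?_, ?_⟩
    · simp only [Finset.mem_product, Finset.mem_range]
      constructor
      · have := Nat.div_le_div_right (c := k₁) (show p.1 ≤ n₁ by omega)
        omega
      · have := Nat.div_le_div_right (c := k₂) (show p.2 ≤ n₂ by omega)
        omega
    · rw [mem_sq]
      have h1 := Nat.div_mul_le_self p.1 k₁
      have h2 := Nat.div_mul_le_self p.2 k₂
      have h3 : p.1 < p.1 / k₁ * k₁ + k₁ := by
        have hd := Nat.div_add_mod p.1 k₁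
        have hm := Nat.mod_lt p.1 (show 0 < k₁ by omega)
        have hc : p.1 / k₁ * k₁ = k₁ * (p.1 / k₁) := Nat.mul_comm _ _
        omega
      have h4 : p.2 < p.2 / k₂ * k₂ + k₂ := by
        have hd := Nat.div_add_mod p.2 k₂
        have hm := Nat.mod_lt p.2 (show 0 < k₂ by omega)
        have hc : p.2 / k₂ * k₂ = k₂ * (p.2 / k₂) := Nat.mul_comm _ _
        omega
      exact ⟨⟨h1, h3⟩, h2, h4⟩
  calc occCount x a n₁ n₂ = cnt x a (sq (0,0) n₁ n₂) := occCount_eq _ _ _ _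
    _ ≤ cnt x a ((Finset.range q₁ ×ˢ Finset.range q₂).biUnion
        (fun ij => sq (ij.1 * k₁, ij.2 * k₂) k₁ k₂)) := cnt_mono hsub
    _ ≤ ∑ ij ∈ Finset.range q₁ ×ˢ Finset.range q₂,
        cnt x a (sq (ij.1 * k₁, ij.2 * k₂) k₁ k₂) := by
        rw [cnt, Finset.filter_biUnion]
        exact Finset.card_biUnion_le
    _ ≤ (Finset.range q₁ ×ˢ Finset.range q₂).card * maxOcc X a k₁ k₂ := by
        rw [← smul_eq_mul]
        exact Finset.sum_le_card_nsmul _ _ _ (fun ij _ => cnt_sq_le hX hx _ _ _ _)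
    _ = q₁ * q₂ * maxOcc X a k₁ k₂ := by rw [Finset.card_product]; simp

-- ### chunk 3 : freqSup basics and Fekete

lemma bddBelow_freqSet (X : Set (ℕ × ℕ → A)) (a : A) :
    BddBelow {r : ℝ | ∃ k₁ k₂ : ℕ, 1 ≤ k₁ ∧ 1 ≤ k₂ ∧ r = (maxOcc X a k₁ k₂ : ℝ) / (k₁ * k₂)} := by
  refine ⟨0, fun r hr => ?_⟩
  obtain ⟨k₁, k₂, h1, h2, rfl⟩ := hr
  positivity

lemma freqSup_nonneg (X : Set (ℕ × ℕ → A)) (a : A) : 0 ≤ freqSup X a := by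
  unfold freqSup
  apply Real.sInf_nonneg
  rintro r ⟨k₁, k₂, h1, h2, rfl⟩
  positivity

lemma freqSup_le (X : Set (ℕ × ℕ → A)) (a : A) {k₁ k₂ : ℕ} (hk₁ : 1 ≤ k₁) (hk₂ : 1 ≤ k₂) :
    freqSup X a ≤ (maxOcc X a k₁ k₂ : ℝ) / (k₁ * k₂) := by
  unfold freqSup
  exact csInf_le (bddBelow_freqSet X a) ⟨k₁, k₂, hk₁, hk₂, rfl⟩

lemma freqSup_mul_le (X : Set (ℕ × ℕ → A)) (a : A) {n : ℕ} (hn : 1 ≤ n) :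
    freqSup X a * (n * n) ≤ (maxOcc X a n n : ℝ) := by
  have h := freqSup_le X a hn hn
  have hpos : (0 : ℝ) < (n : ℝ) * n := by
    have : (1 : ℝ) ≤ (n : ℝ) := by exact_mod_cast hn
    nlinarith
  rw [le_div_iff₀ hpos] at h
  exact h

lemma freqSup_le_one (hne : X.Nonempty) (a : A) : freqSup X a ≤ 1 := by
  have h := freqSup_le X a (le_refl 1) (le_refl 1)
  have h2 := maxOcc_le hne a 1 1
  have h3 : (maxOcc X a 1 1 : ℝ) ≤ 1 := by exact_mod_cast h2
  have h4 : ((1:ℕ):ℝ) * ((1:ℕ):ℝ) = 1 := by norm_num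
  rw [h4] at h
  simpa using h.trans (by simpa using h3)

lemma fekete (hX : IsN2Shift X) (hne : X.Nonempty) (a : A) {ε : ℝ} (hε : 0 < ε) (hε1 : ε ≤ 1) :
    ∃ s₀ : ℕ, 1 ≤ s₀ ∧ ∀ t : ℕ, s₀ ≤ t →
      (maxOcc X a t t : ℝ) ≤ (freqSup X a + ε) * t ^ 2 := by
  have hc0 : 0 ≤ freqSup X a := freqSup_nonneg X a
  have hc1 : freqSup X a ≤ 1 := freqSup_le_one hne a
  set c := freqSup X a with hc
  have hSne : {r : ℝ | ∃ k₁ k₂ : ℕ, 1 ≤ k₁ ∧ 1 ≤ k₂ ∧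
      r = (maxOcc X a k₁ k₂ : ℝ) / (k₁ * k₂)}.Nonempty :=
    ⟨_, ⟨1, 1, le_refl 1, le_refl 1, rfl⟩⟩
  have hlt : sInf {r : ℝ | ∃ k₁ k₂ : ℕ, 1 ≤ k₁ ∧ 1 ≤ k₂ ∧
      r = (maxOcc X a k₁ k₂ : ℝ) / (k₁ * k₂)} < c + ε / 2 := by
    have h0 : freqSup X a < c + ε / 2 := by rw [← hc]; linarith
    unfold freqSup at h0
    exact h0
  obtain ⟨r, hrmem, hrlt⟩ := exists_lt_of_csInf_lt hSne hlt
  obtain ⟨k₁, k₂, hk₁, hk₂, rfl⟩ := hrmem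
  have hk₁R : (1 : ℝ) ≤ (k₁ : ℝ) := by exact_mod_cast hk₁
  have hk₂R : (1 : ℝ) ≤ (k₂ : ℝ) := by exact_mod_cast hk₂
  have hkpos : (0 : ℝ) < (k₁ : ℝ) * k₂ := by nlinarith
  have hMk : (maxOcc X a k₁ k₂ : ℝ) ≤ (c + ε / 2) * (k₁ * k₂) := by
    rw [div_lt_iff₀ hkpos] at hrlt
    nlinarith
  set K := max k₁ k₂ with hK
  have hKk₁ : k₁ ≤ K := le_max_left _ _
  have hKk₂ : k₂ ≤ K := le_max_right _ _
  have hK1 : 1 ≤ K := le_trans hk₁ hKk₁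
  obtain ⟨N, hN⟩ := exists_nat_ge (16 * (K : ℝ) / ε)
  refine ⟨max N K, le_trans hK1 (le_max_right _ _), fun t ht => ?_⟩
  have htK : K ≤ t := le_trans (le_max_right _ _) ht
  have htN : (16 * (K : ℝ) / ε) ≤ (t : ℝ) := by
    refine le_trans hN ?_
    exact_mod_cast le_trans (le_max_left _ _) ht
  have htKe : 16 * (K : ℝ) ≤ ε * t := by
    rw [div_le_iff₀ hε] at htN; linarith
  have ht1 : 1 ≤ t := le_trans hK1 htK
  -- natural number covering bound
  obtain ⟨z, hz, hzM⟩ := exists_maximizer hne a t t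
  have hcov : maxOcc X a t t ≤ (t / k₁ + 1) * (t / k₂ + 1) * maxOcc X a k₁ k₂ := by
    rw [← hzM]; exact occCount_le_cover hX hz hk₁ hk₂ t t
  have hq₁ : ((t / k₁ + 1) * k₁ : ℕ) ≤ t + k₁ := by
    have h := Nat.div_mul_le_self t k₁
    have he : (t / k₁ + 1) * k₁ = t / k₁ * k₁ + k₁ := by ring
    omega
  have hq₂ : ((t / k₂ + 1) * k₂ : ℕ) ≤ t + k₂ := by
    have h := Nat.div_mul_le_self t k₂
    have he : (t / k₂ + 1) * k₂ = t / k₂ * k₂ + k₂ := by ring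
    omega
  have hq₁R : ((t / k₁ + 1 : ℕ) : ℝ) * k₁ ≤ (t : ℝ) + k₁ := by exact_mod_cast hq₁
  have hq₂R : ((t / k₂ + 1 : ℕ) : ℝ) * k₂ ≤ (t : ℝ) + k₂ := by exact_mod_cast hq₂
  have hcovR : (maxOcc X a t t : ℝ) ≤ ((t / k₁ + 1 : ℕ) : ℝ) * ((t / k₂ + 1 : ℕ) : ℝ)
      * (maxOcc X a k₁ k₂ : ℝ) := by exact_mod_cast hcov
  have hstep : (maxOcc X a t t : ℝ) ≤ (c + ε / 2) * (((t : ℝ) + k₁) * ((t : ℝ) + k₂)) := by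
    have hq₁pos : (0 : ℝ) ≤ ((t / k₁ + 1 : ℕ) : ℝ) := by positivity
    have hq₂pos : (0 : ℝ) ≤ ((t / k₂ + 1 : ℕ) : ℝ) := by positivity
    calc (maxOcc X a t t : ℝ)
        ≤ ((t / k₁ + 1 : ℕ) : ℝ) * ((t / k₂ + 1 : ℕ) : ℝ) * (maxOcc X a k₁ k₂ : ℝ) := hcovR
      _ ≤ ((t / k₁ + 1 : ℕ) : ℝ) * ((t / k₂ + 1 : ℕ) : ℝ) * ((c + ε / 2) * (k₁ * k₂)) := by
          apply mul_le_mul_of_nonneg_left hMk (by positivity)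
      _ = (c + ε / 2) * ((((t / k₁ + 1 : ℕ) : ℝ) * k₁) * ((((t / k₂ + 1 : ℕ) : ℝ)) * k₂)) := by
          ring
      _ ≤ (c + ε / 2) * (((t : ℝ) + k₁) * ((t : ℝ) + k₂)) := by
          apply mul_le_mul_of_nonneg_left _ (by linarith)
          apply mul_le_mul hq₁R hq₂R (by positivity) (by linarith)
  have hKR : (k₁ : ℝ) ≤ K ∧ (k₂ : ℝ) ≤ K := ⟨by exact_mod_cast hKk₁, by exact_mod_cast hKk₂⟩
  have htKR : (K : ℝ) ≤ t := by exact_mod_cast htK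
  have hK1R : (1 : ℝ) ≤ K := by exact_mod_cast hK1
  have ht1R : (1 : ℝ) ≤ t := by exact_mod_cast ht1
  have hfinal : (c + ε / 2) * (((t : ℝ) + k₁) * ((t : ℝ) + k₂)) ≤ (c + ε) * t ^ 2 := by
    have ht0R : (0:ℝ) ≤ t := by linarith
    have h1 : ((t : ℝ) + k₁) * ((t : ℝ) + k₂) ≤ ((t : ℝ) + K) ^ 2 := by
      have hm := mul_le_mul (show (t:ℝ)+k₁ ≤ (t:ℝ)+K by linarith [hKR.1])
        (show (t:ℝ)+k₂ ≤ (t:ℝ)+K by linarith [hKR.2])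
        (by linarith) (by linarith)
      calc ((t : ℝ) + k₁) * ((t : ℝ) + k₂) ≤ ((t:ℝ)+K)*((t:ℝ)+K) := hm
        _ = ((t:ℝ)+K)^2 := by ring
    have hKt : (K:ℝ)^2 ≤ (t:ℝ) * K := by
      have hm := mul_le_mul_of_nonneg_right htKR (show (0:ℝ) ≤ K by linarith)
      calc (K:ℝ)^2 = K*K := by ring
        _ ≤ (t:ℝ)*K := hm
    have hKt2 : 16*(K:ℝ)*(t:ℝ) ≤ ε * t^2 := by
      have hm := mul_le_mul_of_nonneg_right htKe ht0R
      calc 16*(K:ℝ)*(t:ℝ) = 16*K*t := by ring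
        _ ≤ ε * t * t := hm
        _ = ε * t^2 := by ring
    have hexp : ((t:ℝ) + K)^2 ≤ (t:ℝ)^2 + 3*((t:ℝ)*K) := by
      have : ((t:ℝ)+K)^2 = t^2 + 2*(t*K) + K^2 := by ring
      linarith [hKt]
    have h2 : (c + ε / 2) * ((t : ℝ) + K) ^ 2 ≤ (c + ε) * t ^ 2 := by
      have hKtpos : (0:ℝ) ≤ (t:ℝ)*K := by positivity
      have hA : (c + ε / 2) * ((t : ℝ) + K) ^ 2 ≤ (c + ε/2) * ((t:ℝ)^2 + 3*((t:ℝ)*K)) :=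
        mul_le_mul_of_nonneg_left hexp (by linarith)
      have hB : (c + ε/2) * ((t:ℝ)^2 + 3*((t:ℝ)*K)) =
          (c + ε/2)*(t:ℝ)^2 + ((c+ε/2)*3)*((t:ℝ)*K) := by ring
      have hC : ((c+ε/2)*3)*((t:ℝ)*K) ≤ 6*((t:ℝ)*K) :=
        mul_le_mul_of_nonneg_right (by linarith) hKtpos
      have hD : 6*((t:ℝ)*K) ≤ (6/16) * (ε * t^2) := by linarith [hKt2]
      have hE : (c + ε/2)*(t:ℝ)^2 + (6/16)*(ε*t^2) ≤ (c+ε)*t^2 := by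
        have hpos : (0:ℝ) ≤ ε*t^2 := by positivity
        have hexpand : (c+ε)*t^2 = (c+ε/2)*t^2 + (1/2)*(ε*t^2) := by ring
        linarith
      linarith
    calc (c + ε / 2) * (((t : ℝ) + k₁) * ((t : ℝ) + k₂))
        ≤ (c + ε / 2) * ((t : ℝ) + K) ^ 2 := by apply mul_le_mul_of_nonneg_left h1 (by linarith)
      _ ≤ (c + ε) * t ^ 2 := h2
  linarith

-- ### chunk 4 : double counting

lemma double_count (z : ℕ × ℕ → A) (a : A) {n s S : ℕ} (hs : 1 ≤ s) (hsS : s ≤ S)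
    (hn : 2 * S ≤ n) :
    s * s * occCount z a n n ≤
      (∑ v ∈ Finset.range (n - S + 1) ×ˢ Finset.range (n - S + 1), cnt z a (sq v s s))
        + s * s * (4 * S * n) := by
  classical
  set T := n - S + 1 with hT
  set V := Finset.range T ×ˢ Finset.range T with hV
  set core := Finset.Ico (s - 1) T ×ˢ Finset.Ico (s - 1) T with hcore
  have hS1 : 1 ≤ S := le_trans hs hsS
  have hTn : T ≤ n := by omega
  -- Step A : occCount z a n n ≤ cnt z a core + 4*S*n
  have hsubset : core ⊆ sq (0, 0) n n := by
    intro p hp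
    simp only [hcore, Finset.mem_product, Finset.mem_Ico] at hp
    rw [mem_sq]
    constructor <;> constructor <;> omega
  have hcard_core : core.card = (T - (s - 1)) * (T - (s - 1)) := by
    simp [hcore, Nat.card_Ico]
  have hA : occCount z a n n ≤ cnt z a core + 4 * S * n := by
    have h1 : cnt z a (sq (0,0) n n) ≤ cnt z a core + (sq (0,0) n n \ core).card := by
      have hcover : sq (0,0) n n = core ∪ (sq (0,0) n n \ core) :=
        (Finset.union_sdiff_of_subset hsubset).symm
      calc cnt z a (sq (0,0) n n) = cnt z a (core ∪ (sq (0,0) n n \ core)) := by rw [← hcover]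
        _ ≤ cnt z a core + cnt z a (sq (0,0) n n \ core) := by
            unfold cnt
            rw [Finset.filter_union]
            exact Finset.card_union_le _ _
        _ ≤ cnt z a core + (sq (0,0) n n \ core).card := by
            exact Nat.add_le_add_left (cnt_le_card _ _ _) _
    have h2 : (sq (0,0) n n \ core).card = n * n - core.card := by
      rw [Finset.card_sdiff_of_subset hsubset, card_sq]
    have h3 : n * n ≤ core.card + 4 * S * n := by
      rw [hcard_core]
      set m := T - (s - 1) with hm
      set d := n - 2 * S with hd
      have hdm : d ≤ m := by omega
      have hdn : n = d + 2 * S := by omega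
      have hdd : d * d ≤ m * m := Nat.mul_le_mul hdm hdm
      have hexp : (d + 2 * S) * (d + 2 * S) = d * d + 4 * S * (d + S) := by ring
      have hmono : 4 * S * (d + S) ≤ 4 * S * n := by
        apply Nat.mul_le_mul_left
        omega
      calc n * n = d * d + 4 * S * (d + S) := by rw [hdn, hexp]
        _ ≤ d * d + 4 * S * n := Nat.add_le_add_left hmono _
        _ ≤ m * m + 4 * S * n := Nat.add_le_add_right hdd _
    rw [occCount_eq]
    have := cnt_le_card z a core
    omega
  -- Step B : s * s * cnt z a core ≤ ∑ v ∈ V, cnt z a (sq v s s)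
  have hB : s * s * cnt z a core ≤ ∑ v ∈ V, cnt z a (sq v s s) := by
    have hle : ∀ v ∈ V, (core.filter (fun p => p ∈ sq v s s ∧ z p = a)).card
        ≤ cnt z a (sq v s s) := by
      intro v _
      apply Finset.card_le_card
      intro p hp
      simp only [Finset.mem_filter] at hp ⊢
      exact ⟨hp.2.1, hp.2.2⟩
    have hswap : ∑ v ∈ V, (core.filter (fun p => p ∈ sq v s s ∧ z p = a)).card
        = ∑ p ∈ core.filter (fun p => z p = a),
            (V.filter (fun v => p ∈ sq v s s)).card := by
      have e1 : ∀ v, (core.filter (fun p => p ∈ sq v s s ∧ z p = a)).card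
          = ∑ p ∈ core, if p ∈ sq v s s ∧ z p = a then 1 else 0 := by
        intro v; rw [Finset.card_filter]
      simp only [e1]
      rw [Finset.sum_comm]
      calc ∑ p ∈ core, ∑ v ∈ V, (if p ∈ sq v s s ∧ z p = a then 1 else 0)
          = ∑ p ∈ core, (if z p = a then (V.filter (fun v => p ∈ sq v s s)).card else 0) := by
            apply Finset.sum_congr rfl
            intro p _
            by_cases hz : z p = a
            · simp only [hz, and_true, if_true, Finset.card_filter]
            · simp [hz]
        _ = ∑ p ∈ core.filter (fun p => z p = a),
              (V.filter (fun v => p ∈ sq v s s)).card :=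
            (Finset.sum_filter _ _).symm
    have hcount : ∀ p ∈ core.filter (fun p => z p = a),
        (V.filter (fun v => p ∈ sq v s s)).card = s * s := by
      intro p hp
      rw [Finset.mem_filter, hcore, Finset.mem_product, Finset.mem_Ico, Finset.mem_Ico] at hp
      obtain ⟨⟨⟨hp1, hp2⟩, hp3, hp4⟩, -⟩ := hp
      have hfe : V.filter (fun v => p ∈ sq v s s)
          = Finset.Ico (p.1 + 1 - s) (p.1 + 1) ×ˢ Finset.Ico (p.2 + 1 - s) (p.2 + 1) := by
        ext v
        simp only [Finset.mem_filter, hV, Finset.mem_product, Finset.mem_range, mem_sq,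
          Finset.mem_Ico]
        omega
      rw [hfe, Finset.card_product, Nat.card_Ico, Nat.card_Ico]
      have e1 : p.1 + 1 - (p.1 + 1 - s) = s := by omega
      have e2 : p.2 + 1 - (p.2 + 1 - s) = s := by omega
      rw [e1, e2]
    calc s * s * cnt z a core
        = ∑ p ∈ core.filter (fun p => z p = a), s * s := by
          rw [Finset.sum_const, smul_eq_mul, cnt]
          ring
      _ = ∑ p ∈ core.filter (fun p => z p = a),
            (V.filter (fun v => p ∈ sq v s s)).card := by
          exact (Finset.sum_congr rfl (fun p hp => (hcount p hp).symm))
      _ = ∑ v ∈ V, (core.filter (fun p => p ∈ sq v s s ∧ z p = a)).card := hswap.symm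
      _ ≤ ∑ v ∈ V, cnt z a (sq v s s) := Finset.sum_le_sum hle
  -- combine
  calc s * s * occCount z a n n ≤ s * s * (cnt z a core + 4 * S * n) :=
        Nat.mul_le_mul_left _ hA
    _ = s * s * cnt z a core + s * s * (4 * S * n) := by ring
    _ ≤ (∑ v ∈ V, cnt z a (sq v s s)) + s * s * (4 * S * n) := Nat.add_le_add_right hB _

-- ### chunk 5 : geometric sum helper and the stage lemma

lemma geom_half_sum (J : ℕ) : ∑ j ∈ Finset.Icc 1 J, ((1:ℝ)/2)^j ≤ 1 - (1/2)^J := by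
  induction J with
  | zero => simp
  | succ J ih =>
    rw [Finset.sum_Icc_succ_top (by omega : 1 ≤ J + 1)]
    have : ((1:ℝ)/2)^(J+1) = (1/2)^J * (1/2) := by ring
    rw [this]
    linarith [ih]

lemma stage_nonempty (hX : IsN2Shift X) (hne : X.Nonempty) (a : A) (J : ℕ) (s : ℕ → ℕ)
    (hs1 : ∀ j, 1 ≤ j → j ≤ J → 1 ≤ s j)
    (hmono : ∀ j, 1 ≤ j → j ≤ J → s j ≤ s J)
    (hgood : ∀ j, 1 ≤ j → j ≤ J → (maxOcc X a (s j) (s j) : ℝ)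
      ≤ (freqSup X a + (1/8) * (1/2)^j * (1/(j:ℝ))) * (s j)^2) :
    ∃ x ∈ X, ∀ j, 1 ≤ j → j ≤ J →
      (freqSup X a - 1/(j:ℝ)) * (s j)^2 ≤ (occCount x a (s j) (s j) : ℝ) := by
  classical
  rcases Nat.eq_zero_or_pos J with hJ0 | hJpos
  · obtain ⟨x, hx⟩ := hne
    exact ⟨x, hx, fun j h1 h2 => by omega⟩
  set c := freqSup X a with hc
  have hc0 : 0 ≤ c := freqSup_nonneg X a
  set S := s J with hS
  have hS1 : 1 ≤ S := hs1 J hJpos (le_refl J)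
  set n := 64 * (S + 1) * ((J + 1) * (J + 1)) with hn
  have hJJ1 : 1 ≤ (J + 1) * (J + 1) := Nat.one_le_iff_ne_zero.mpr (by positivity)
  have hn64 : 64 * (S + 1) ≤ n := Nat.le_mul_of_pos_right _ (by omega)
  have hn2S : 2 * S ≤ n := by omega
  have hn1 : 1 ≤ n := by omega
  set T := n - S + 1 with hT
  set V := Finset.range T ×ˢ Finset.range T with hV
  have hVcard : V.card = T * T := by
    rw [hV, Finset.card_product, Finset.card_range]
  have hTS : T + S = n + 1 := by omega
  have hTn : T ≤ n := by omega
  obtain ⟨z, hz, hzM⟩ := exists_maximizer hne a n n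
  have hMn : c * ((n : ℝ) * n) ≤ (occCount z a n n : ℝ) := by
    rw [hzM]; exact freqSup_mul_le X a hn1
  -- the bad sets
  set Bad : ℕ → Finset (ℕ × ℕ) := fun j =>
    V.filter (fun v => ((cnt z a (sq v (s j) (s j)) : ℝ) < (c - 1/(j:ℝ)) * (s j)^2)) with hBad
  -- per-scale bound on the number of bad positions
  have hBadBound : ∀ j, 1 ≤ j → j ≤ J →
      ((Bad j).card : ℝ) ≤ (1/8) * (1/2)^j * (T * T) + 4 * S * n * j := by
    intro j hj1 hjJ
    have hsj1 : 1 ≤ s j := hs1 j hj1 hjJ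
    have hsjS : s j ≤ S := hmono j hj1 hjJ
    have hjR : (1:ℝ) ≤ (j:ℝ) := by exact_mod_cast hj1
    have hjpos : (0:ℝ) < (j:ℝ) := by linarith
    set σ : ℝ := ((s j : ℝ))^2 with hσdef
    have hσpos : (0:ℝ) < σ := by
      have : (1:ℝ) ≤ (s j : ℝ) := by exact_mod_cast hsj1
      positivity
    set ε : ℝ := 1/(j:ℝ) with hε
    set η : ℝ := (1/8) * (1/2)^j * (1/(j:ℝ)) with hη
    have hηpos : 0 < η := by rw [hη]; positivity
    -- double counting, cast to ℝ
    have hDC := double_count z a hsj1 hsjS hn2S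
    have hDCR : σ * (occCount z a n n : ℝ)
        ≤ (∑ v ∈ V, (cnt z a (sq v (s j) (s j)) : ℝ)) + σ * (4 * S * n) := by
      have := (Nat.cast_le (α := ℝ)).mpr hDC
      push_cast at this
      rw [hσdef]
      nlinarith [this]
    -- split the sum
    set B : ℝ := ((Bad j).card : ℝ) with hBdef
    have hBnonneg : 0 ≤ B := by rw [hBdef]; exact Nat.cast_nonneg _
    have hsplit : (∑ v ∈ V, (cnt z a (sq v (s j) (s j)) : ℝ))
        ≤ B * ((c - ε) * σ) + ((T : ℝ) * T - B) * ((c + η) * σ) := by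
      set f : ℕ × ℕ → ℝ := fun v => (cnt z a (sq v (s j) (s j)) : ℝ) with hf
      set pred : ℕ × ℕ → Prop :=
        fun v => ((cnt z a (sq v (s j) (s j)) : ℝ) < (c - 1/(j:ℝ)) * ((s j : ℝ))^2) with hpred
      have hBadj : Bad j = V.filter pred := by simp only [hBad, hpred]
      have hsum := (Finset.sum_filter_add_sum_filter_not V pred f).symm
      have hb1 : ∑ v ∈ V.filter pred, f v
          ≤ ((V.filter pred).card : ℝ) * ((c - ε) * σ) := by
        have := Finset.sum_le_card_nsmul (V.filter pred) f ((c - ε) * σ) ?_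
        · simpa [nsmul_eq_mul] using this
        · intro v hv
          rw [Finset.mem_filter] at hv
          have := hv.2
          rw [hpred] at this
          have he : (c - ε) * σ = (c - 1/(j:ℝ)) * ((s j : ℝ))^2 := by rw [hε, hσdef]
          rw [hf, he]
          exact le_of_lt this
      have hb2 : ∑ v ∈ V.filter (fun v => ¬ pred v), f v
          ≤ ((V.filter (fun v => ¬ pred v)).card : ℝ) * ((c + η) * σ) := by
        have := Finset.sum_le_card_nsmul (V.filter (fun v => ¬ pred v)) f ((c + η) * σ) ?_
        · simpa [nsmul_eq_mul] using this
        · intro v hv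
          have hcle : cnt z a (sq v (s j) (s j)) ≤ maxOcc X a (s j) (s j) := by
            obtain ⟨v1, v2⟩ := v
            exact cnt_sq_le hX hz v1 v2 (s j) (s j)
          have hcleR : (cnt z a (sq v (s j) (s j)) : ℝ) ≤ (maxOcc X a (s j) (s j) : ℝ) := by
            exact_mod_cast hcle
          have hg := hgood j hj1 hjJ
          rw [hf]
          calc (cnt z a (sq v (s j) (s j)) : ℝ) ≤ (maxOcc X a (s j) (s j) : ℝ) := hcleR
            _ ≤ (c + (1/8) * (1/2)^j * (1/(j:ℝ))) * ((s j : ℝ))^2 := hg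
            _ = (c + η) * σ := by rw [hη, hσdef]
      have hcards : ((V.filter (fun v => ¬ pred v)).card : ℝ)
          = (T : ℝ) * T - ((V.filter pred).card : ℝ) := by
        have hpc := Finset.card_filter_add_card_filter_not (s := V) (p := pred)
        have hpcn : ((V.filter pred).card + (V.filter (fun v => ¬ pred v)).card : ℕ) = T * T := by
          rw [hpc, hVcard]
        have hcast : ((V.filter pred).card : ℝ) + ((V.filter (fun v => ¬ pred v)).card : ℝ)
            = (T : ℝ) * T := by exact_mod_cast hpcn
        linarith
      have hBeq : B = ((V.filter pred).card : ℝ) := by rw [hBdef, hBadj]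
      rw [hBeq]
      calc ∑ v ∈ V, f v
          = ∑ v ∈ V.filter pred, f v + ∑ v ∈ V.filter (fun v => ¬ pred v), f v := hsum
        _ ≤ ((V.filter pred).card : ℝ) * ((c - ε) * σ)
            + ((V.filter (fun v => ¬ pred v)).card : ℝ) * ((c + η) * σ) := by
            linarith [hb1, hb2]
        _ = ((V.filter pred).card : ℝ) * ((c - ε) * σ)
            + ((T : ℝ) * T - ((V.filter pred).card : ℝ)) * ((c + η) * σ) := by
            rw [hcards]
    -- master inequality
    have hWn : c * ((T:ℝ) * T) ≤ c * ((n:ℝ) * n) := by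
      have hTnR : (T:ℝ) ≤ (n:ℝ) := by exact_mod_cast hTn
      have hT0 : (0:ℝ) ≤ (T:ℝ) := by positivity
      have : (T:ℝ) * T ≤ (n:ℝ) * n := by nlinarith
      exact mul_le_mul_of_nonneg_left this hc0
    have hmaster : ε * B ≤ η * ((T:ℝ) * T) + 4 * S * n := by
      have hσW : σ * (c * ((T:ℝ)*T)) ≤ σ * (c * ((n:ℝ)*n)) :=
        mul_le_mul_of_nonneg_left hWn (le_of_lt hσpos)
      have hσM : σ * (c * ((n:ℝ)*n)) ≤ σ * (occCount z a n n : ℝ) :=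
        mul_le_mul_of_nonneg_left hMn (le_of_lt hσpos)
      set R : ℝ := -(ε*B) + η*((T:ℝ)*T) - η*B + 4*S*n with hR
      have hrhs : B * ((c - ε) * σ) + ((T : ℝ) * T - B) * ((c + η) * σ) + σ * (4*S*n)
          = σ * (c * ((T:ℝ)*T)) + σ * R := by rw [hR]; ring
      have hchain : σ * (c * ((T:ℝ)*T)) ≤ σ * (c * ((T:ℝ)*T)) + σ * R := by
        calc σ * (c * ((T:ℝ)*T)) ≤ σ * (occCount z a n n : ℝ) := le_trans hσW hσM
          _ ≤ (∑ v ∈ V, (cnt z a (sq v (s j) (s j)) : ℝ)) + σ * (4 * S * n) := hDCR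
          _ ≤ B * ((c - ε) * σ) + ((T : ℝ) * T - B) * ((c + η) * σ) + σ * (4*S*n) := by
              linarith [hsplit]
          _ = σ * (c * ((T:ℝ)*T)) + σ * R := hrhs
      have hσR : σ * 0 ≤ σ * R := by
        rw [mul_zero]; linarith
      have hR0 : 0 ≤ R := le_of_mul_le_mul_left hσR hσpos
      have hηB : 0 ≤ η * B := mul_nonneg (le_of_lt hηpos) hBnonneg
      rw [hR] at hR0
      linarith
    -- multiply by j
    have hjε : (j:ℝ) * (ε * B) = B := by
      rw [hε]; field_simp
    have hjη : (j:ℝ) * η = (1/8) * (1/2)^j := by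
      rw [hη]; field_simp
    have := mul_le_mul_of_nonneg_left hmaster (le_of_lt hjpos)
    calc B = (j:ℝ) * (ε * B) := hjε.symm
      _ ≤ (j:ℝ) * (η * ((T:ℝ)*T) + 4*S*n) := this
      _ = ((j:ℝ) * η) * ((T:ℝ)*T) + 4*S*n*j := by ring
      _ = (1/8) * (1/2)^j * ((T:ℝ)*T) + 4*S*n*j := by rw [hjη]
  -- sum the bad-set bounds and find a simultaneously good position
  set BadAll := (Finset.Icc 1 J).biUnion Bad with hBadAll
  have hsumcard : (BadAll.card : ℝ) ≤ ∑ j ∈ Finset.Icc 1 J, ((Bad j).card : ℝ) := by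
    have h := Finset.card_biUnion_le (s := Finset.Icc 1 J) (t := Bad)
    have h2 : ((Finset.Icc 1 J).biUnion Bad).card ≤ ∑ j ∈ Finset.Icc 1 J, (Bad j).card := h
    calc (BadAll.card : ℝ) ≤ ((∑ j ∈ Finset.Icc 1 J, (Bad j).card : ℕ) : ℝ) := by
          exact_mod_cast h2
      _ = ∑ j ∈ Finset.Icc 1 J, ((Bad j).card : ℝ) := by push_cast; ring
  have hsumbound : ∑ j ∈ Finset.Icc 1 J, ((Bad j).card : ℝ)
      ≤ (1/8) * ((T:ℝ)*T) + 4*(S:ℝ)*n*J*J := by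
    have h1 : ∑ j ∈ Finset.Icc 1 J, ((Bad j).card : ℝ)
        ≤ ∑ j ∈ Finset.Icc 1 J, ((1/8) * (1/2)^j * ((T:ℝ)*T) + 4*S*n*J) := by
      apply Finset.sum_le_sum
      intro j hj
      rw [Finset.mem_Icc] at hj
      have hb := hBadBound j hj.1 hj.2
      have hjJR : (j:ℝ) ≤ (J:ℝ) := by exact_mod_cast hj.2
      have hSn0 : (0:ℝ) ≤ 4*(S:ℝ)*n := by positivity
      have : 4*(S:ℝ)*n*j ≤ 4*(S:ℝ)*n*J := by
        exact mul_le_mul_of_nonneg_left hjJR hSn0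
      linarith
    have h2 : ∑ j ∈ Finset.Icc 1 J, ((1/8) * (1/2)^j * ((T:ℝ)*T) + 4*S*n*J)
        = (1/8) * ((T:ℝ)*T) * (∑ j ∈ Finset.Icc 1 J, ((1:ℝ)/2)^j)
          + (Finset.Icc 1 J).card * (4*(S:ℝ)*n*J) := by
      rw [Finset.sum_add_distrib, Finset.sum_const, nsmul_eq_mul, Finset.mul_sum]
      congr 1
      apply Finset.sum_congr rfl
      intro x _
      ring
    have h3 : (∑ j ∈ Finset.Icc 1 J, ((1:ℝ)/2)^j) ≤ 1 := by
      have := geom_half_sum J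
      have hp : (0:ℝ) ≤ (1/2)^J := by positivity
      linarith
    have h4 : ((Finset.Icc 1 J).card : ℝ) = (J : ℝ) := by
      rw [Nat.card_Icc]; push_cast; ring
    have hT20 : (0:ℝ) ≤ (T:ℝ)*T := by positivity
    have h5 : (1/8) * ((T:ℝ)*T) * (∑ j ∈ Finset.Icc 1 J, ((1:ℝ)/2)^j)
        ≤ (1/8) * ((T:ℝ)*T) := by
      have := mul_le_mul_of_nonneg_left h3 (by positivity : (0:ℝ) ≤ (1/8) * ((T:ℝ)*T))
      linarith [this]
    calc ∑ j ∈ Finset.Icc 1 J, ((Bad j).card : ℝ)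
        ≤ ∑ j ∈ Finset.Icc 1 J, ((1/8) * (1/2)^j * ((T:ℝ)*T) + 4*S*n*J) := h1
      _ = (1/8) * ((T:ℝ)*T) * (∑ j ∈ Finset.Icc 1 J, ((1:ℝ)/2)^j)
          + (Finset.Icc 1 J).card * (4*(S:ℝ)*n*J) := h2
      _ ≤ (1/8) * ((T:ℝ)*T) + 4*(S:ℝ)*n*J*J := by
          rw [h4]
          have h6 : (J:ℝ)*(4*(S:ℝ)*n*J) = 4*(S:ℝ)*n*J*J := by ring
          linarith [h5]
  -- numeric comparison : all bad sets together do not cover V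
  have hkey : 128 * (S * (J * J)) < 7 * n := by
    have hQ : S * (J * J) ≤ (S + 1) * ((J + 1) * (J + 1)) :=
      Nat.mul_le_mul (by omega) (Nat.mul_le_mul (by omega) (by omega))
    have h7n : 7 * n = 448 * ((S + 1) * ((J + 1) * (J + 1))) := by rw [hn]; ring
    have hQ1 : 1 ≤ (S + 1) * ((J + 1) * (J + 1)) := by
      have := Nat.mul_le_mul (show 1 ≤ S + 1 by omega) hJJ1
      omega
    omega
  have hkeyR : 128 * ((S:ℝ) * (J * J)) < 7 * (n:ℝ) := by exact_mod_cast hkey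
  have hTnR : (n:ℝ) ≤ 2 * (T:ℝ) := by
    have hTSR : (T:ℝ) + (S:ℝ) = (n:ℝ) + 1 := by exact_mod_cast hTS
    have hSn : (2:ℝ) * S ≤ (n:ℝ) := by exact_mod_cast hn2S
    linarith
  have hW4 : (n:ℝ) * n ≤ 4 * ((T:ℝ) * T) := by nlinarith [Nat.cast_nonneg (α := ℝ) n]
  have hstep : 4*(S:ℝ)*n*J*J < (7/32) * ((n:ℝ)*n) := by
    have hnpos : (0:ℝ) < (n:ℝ)/32 := by
      have : (1:ℝ) ≤ (n:ℝ) := by exact_mod_cast hn1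
      linarith
    have := mul_lt_mul_of_pos_left hkeyR hnpos
    nlinarith [this]
  have hltV : (BadAll.card : ℝ) < (V.card : ℝ) := by
    have hVR : (V.card : ℝ) = (T:ℝ) * T := by rw [hVcard]; push_cast; ring
    rw [hVR]
    calc (BadAll.card : ℝ) ≤ ∑ j ∈ Finset.Icc 1 J, ((Bad j).card : ℝ) := hsumcard
      _ ≤ (1/8) * ((T:ℝ)*T) + 4*(S:ℝ)*n*J*J := hsumbound
      _ < (1/8) * ((T:ℝ)*T) + (7/32) * ((n:ℝ)*n) := by linarith [hstep]
      _ ≤ (1/8) * ((T:ℝ)*T) + (7/8) * ((T:ℝ)*T) := by linarith [hW4]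
      _ = (T:ℝ)*T := by ring
  have hltVN : BadAll.card < V.card := by exact_mod_cast hltV
  have hexv : ∃ v ∈ V, v ∉ BadAll := by
    by_contra h
    push_neg at h
    have : V ⊆ BadAll := fun v hv => h v hv
    have := Finset.card_le_card this
    omega
  obtain ⟨v, hvV, hvB⟩ := hexv
  refine ⟨shiftPt z v.1 v.2, shiftPt_mem hX hz v.1 v.2, ?_⟩
  intro j hj1 hjJ
  have hnot : v ∉ Bad j := by
    intro hmem
    exact hvB (Finset.mem_biUnion.mpr ⟨j, Finset.mem_Icc.mpr ⟨hj1, hjJ⟩, hmem⟩)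
  have hnotlt : ¬ ((cnt z a (sq v (s j) (s j)) : ℝ) < (c - 1/(j:ℝ)) * ((s j : ℝ))^2) := by
    intro hlt2
    apply hnot
    rw [hBad]
    exact Finset.mem_filter.mpr ⟨hvV, hlt2⟩
  push_neg at hnotlt
  have hocc : occCount (shiftPt z v.1 v.2) a (s j) (s j) = cnt z a (sq v (s j) (s j)) := by
    rw [occCount_shiftPt]
  rw [hocc]
  exact hnotlt

-- ### chunk 6 : closedness of the constraint sets

lemma occCount_congr {x y : ℕ × ℕ → A} {a : A} {k l : ℕ}
    (h : ∀ p ∈ Finset.range k ×ˢ Finset.range l, x p = y p) :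
    occCount x a k l = occCount y a k l := by
  unfold occCount
  congr 1
  apply Finset.filter_congr
  intro p hp
  rw [h p hp]

lemma isClosed_occ_ge [DiscreteTopology A] (a : A) (k l : ℕ) (r : ℝ) :
    IsClosed {x : ℕ × ℕ → A | r ≤ (occCount x a k l : ℝ)} := by
  rw [← isOpen_compl_iff]
  rw [isOpen_iff_mem_nhds]
  intro y hy
  have hopen : ∀ p : ℕ × ℕ, IsOpen {x : ℕ × ℕ → A | x p = y p} := by
    intro p
    have he : {x : ℕ × ℕ → A | x p = y p} = (fun x : ℕ × ℕ → A => x p) ⁻¹' {y p} := rfl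
    rw [he]
    exact (continuous_apply p).isOpen_preimage _ (isOpen_discrete _)
  have hV : {x : ℕ × ℕ → A | ∀ p ∈ Finset.range k ×ˢ Finset.range l, x p = y p} ∈ nhds y := by
    have heq : {x : ℕ × ℕ → A | ∀ p ∈ Finset.range k ×ˢ Finset.range l, x p = y p}
        = ⋂ p ∈ (Finset.range k ×ˢ Finset.range l), {x : ℕ × ℕ → A | x p = y p} := by
      ext x; simp
    rw [heq]
    apply IsOpen.mem_nhds
    · exact isOpen_biInter_finset (fun p _ => hopen p)
    · simp
  apply Filter.mem_of_superset hV
  intro x hx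
  simp only [Set.mem_compl_iff, Set.mem_setOf_eq] at hy ⊢
  have : occCount x a k l = occCount y a k l := occCount_congr hx
  rw [this]
  exact hy

end FreqProof

open FreqProof in
/-- There is a point `x ∈ X` such that the set
`χ_a(x) = {(i,j) : x_{i,j} = a}` has upper density exactly `Fr_a(X)`. -/
theorem exists_point_with_upperDensity_eq_freq
    {A : Type*} [Fintype A] [DecidableEq A] [TopologicalSpace A] [DiscreteTopology A]
    (hA : 2 ≤ Fintype.card A)
    (X : Set (ℕ × ℕ → A)) (hX : IsN2Shift X) (hne : X.Nonempty) (a : A) :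
    ∃ x ∈ X, upperDensity2 {p : ℕ × ℕ | x p = a} = freqSup X a := by
  classical
  set c := freqSup X a with hc
  have hc0 : 0 ≤ c := freqSup_nonneg X a
  have hc1 : c ≤ 1 := freqSup_le_one hne a
  -- a sequence of scales via Fekete
  have hFek : ∀ i : ℕ, ∃ s₀ : ℕ, 1 ≤ s₀ ∧ ∀ t : ℕ, s₀ ≤ t →
      (maxOcc X a t t : ℝ) ≤ (c + (1/8) * (1/2)^(i+1) * (1/((i+1 : ℕ) : ℝ))) * t ^ 2 := by
    intro i
    have hipos : (0:ℝ) < ((i+1 : ℕ) : ℝ) := by positivity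
    have hεpos : 0 < (1/8 : ℝ) * (1/2)^(i+1) * (1/((i+1 : ℕ) : ℝ)) := by positivity
    have hε1 : (1/8 : ℝ) * (1/2)^(i+1) * (1/((i+1 : ℕ) : ℝ)) ≤ 1 := by
      have h1 : ((1:ℝ)/2)^(i+1) ≤ 1 := by
        apply pow_le_one₀ <;> norm_num
      have h2 : (1:ℝ)/((i+1 : ℕ) : ℝ) ≤ 1 := by
        rw [div_le_one hipos]
        exact_mod_cast Nat.one_le_iff_ne_zero.mpr (by omega)
      have h3 : (0:ℝ) ≤ ((1:ℝ)/2)^(i+1) := by positivity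
      have h4 : (0:ℝ) ≤ (1:ℝ)/((i+1 : ℕ) : ℝ) := by positivity
      nlinarith
    exact fekete hX hne a hεpos hε1
  choose f hf1 hf2 using hFek
  -- recursively defined scales
  set sfun : ℕ → ℕ := fun j => Nat.rec 1 (fun i prev => max (prev + 1) (max (i + 1) (f i))) j
    with hsfun
  have hs_succ : ∀ i : ℕ, sfun (i+1) = max (sfun i + 1) (max (i + 1) (f i)) := fun i => rfl
  have hs_ge : ∀ j : ℕ, j ≤ sfun j := by
    intro j
    cases j with
    | zero => exact Nat.zero_le _
    | succ i => rw [hs_succ]; omega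
  have hs_pos : ∀ j : ℕ, 1 ≤ sfun j := by
    intro j
    cases j with
    | zero => exact le_refl 1
    | succ i => rw [hs_succ]; omega
  have hs_mono : Monotone sfun := by
    apply monotone_nat_of_le_succ
    intro i
    rw [hs_succ]; omega
  have hs_good : ∀ j : ℕ, 1 ≤ j →
      (maxOcc X a (sfun j) (sfun j) : ℝ) ≤ (c + (1/8) * (1/2)^j * (1/(j : ℝ))) * (sfun j) ^ 2 := by
    intro j hj
    obtain ⟨i, rfl⟩ : ∃ i, j = i + 1 := ⟨j - 1, by omega⟩
    have hfi : f i ≤ sfun (i+1) := by rw [hs_succ]; omega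
    have := hf2 i (sfun (i+1)) hfi
    exact_mod_cast this
  -- the decreasing family of closed sets
  set D : ℕ → Set (ℕ × ℕ → A) := fun J =>
    X ∩ {x | ∀ j, 1 ≤ j → j ≤ J →
      (c - 1/(j:ℝ)) * ((sfun j : ℝ))^2 ≤ (occCount x a (sfun j) (sfun j) : ℝ)} with hD
  have hDne : ∀ J, (D J).Nonempty := by
    intro J
    obtain ⟨x, hx1, hx2⟩ := stage_nonempty hX hne a J sfun
      (fun j hj _ => hs_pos j)
      (fun j _ hjJ => hs_mono hjJ)
      (fun j hj hjJ => hs_good j hj)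
    exact ⟨x, hx1, fun j h1 h2 => hx2 j h1 h2⟩
  have hDclosed : ∀ J, IsClosed (D J) := by
    intro J
    apply IsClosed.inter hX.1
    have heq : {x : ℕ × ℕ → A | ∀ j, 1 ≤ j → j ≤ J →
        (c - 1/(j:ℝ)) * ((sfun j : ℝ))^2 ≤ (occCount x a (sfun j) (sfun j) : ℝ)}
        = ⋂ (j : ℕ) (_ : 1 ≤ j) (_ : j ≤ J),
          {x : ℕ × ℕ → A | (c - 1/(j:ℝ)) * ((sfun j : ℝ))^2
            ≤ (occCount x a (sfun j) (sfun j) : ℝ)} := by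
      ext x; simp only [Set.mem_setOf_eq, Set.mem_iInter]
    rw [heq]
    exact isClosed_iInter (fun j => isClosed_iInter (fun _ => isClosed_iInter
      (fun _ => isClosed_occ_ge a (sfun j) (sfun j) _)))
  have hDsub : ∀ J, D (J + 1) ⊆ D J := by
    intro J y hy
    exact ⟨hy.1, fun j h1 h2 => hy.2 j h1 (by omega)⟩
  have hDcompact : IsCompact (D 0) := (hDclosed 0).isCompact
  obtain ⟨x, hxmem⟩ := IsCompact.nonempty_iInter_of_sequence_nonempty_isCompact_isClosed
    D hDsub hDne hDcompact hDclosed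
  rw [Set.mem_iInter] at hxmem
  have hxX : x ∈ X := (hxmem 0).1
  have hxprop : ∀ j : ℕ, 1 ≤ j →
      (c - 1/(j:ℝ)) * ((sfun j : ℝ))^2 ≤ (occCount x a (sfun j) (sfun j) : ℝ) := by
    intro j hj
    exact (hxmem j).2 j hj (le_refl j)
  refine ⟨x, hxX, ?_⟩
  -- identify the upper density with the limsup of occurrence frequencies
  set g : ℕ × ℕ → ℝ := fun N => ((occCount x a N.1 N.2 : ℝ)) / ((N.1 : ℝ) * N.2) with hg
  have hset : ∀ N : ℕ × ℕ,
      (({p : ℕ × ℕ | x p = a} ∩ {p | p.1 < N.1 ∧ p.2 < N.2}).ncard : ℝ)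
        / ((N.1 : ℝ) * N.2) = g N := by
    intro N
    have hseteq : ({p : ℕ × ℕ | x p = a} ∩ {p | p.1 < N.1 ∧ p.2 < N.2})
        = ↑((Finset.range N.1 ×ˢ Finset.range N.2).filter (fun p => x p = a)) := by
      ext p
      simp only [Set.mem_inter_iff, Set.mem_setOf_eq, Finset.coe_filter,
        Finset.mem_product, Finset.mem_range]
      tauto
    rw [hg, hseteq, Set.ncard_coe_finset]
    rfl
  have hUD : upperDensity2 {p : ℕ × ℕ | x p = a} = limsup g atTop := by
    unfold upperDensity2
    congr 1
    funext N
    exact hset N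
  rw [hUD]
  -- boundedness facts
  have hg0 : ∀ N, 0 ≤ g N := by
    intro N
    rw [hg]
    positivity
  have hg1 : ∀ N, g N ≤ 1 := by
    intro N
    rcases eq_or_lt_of_le (show (0:ℝ) ≤ (N.1 : ℝ) * N.2 by positivity) with h | h
    · rw [hg]
      simp only [← h, div_zero]
      norm_num
    · rw [hg, div_le_one h]
      have := occCount_le x a N.1 N.2
      calc ((occCount x a N.1 N.2 : ℕ) : ℝ) ≤ ((N.1 * N.2 : ℕ) : ℝ) := by exact_mod_cast this
        _ = (N.1 : ℝ) * N.2 := by push_cast; ring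
  have hBound : IsBoundedUnder (· ≤ ·) atTop g := ⟨1, Filter.eventually_map.mpr
    (Filter.Eventually.of_forall hg1)⟩
  have hBoundBelow : IsBoundedUnder (· ≥ ·) atTop g := ⟨0, Filter.eventually_map.mpr
    (Filter.Eventually.of_forall hg0)⟩
  have hCobound : IsCoboundedUnder (· ≤ ·) atTop g :=
    Filter.IsBoundedUnder.isCoboundedUnder_le hBoundBelow
  -- upper bound
  have hle : limsup g atTop ≤ c := by
    rw [hc]
    unfold freqSup
    refine le_csInf ⟨(maxOcc X a 1 1 : ℝ) / (((1:ℕ):ℝ) * ((1:ℕ):ℝ)),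
      ⟨1, 1, le_refl 1, le_refl 1, rfl⟩⟩ ?_
    rintro b ⟨k₁, k₂, hk₁, hk₂, rfl⟩
    set M : ℝ := (maxOcc X a k₁ k₂ : ℝ) with hM
    have hk₁R : (1:ℝ) ≤ (k₁:ℝ) := by exact_mod_cast hk₁
    have hk₂R : (1:ℝ) ≤ (k₂:ℝ) := by exact_mod_cast hk₂
    have hkk : (0:ℝ) < (k₁:ℝ) * k₂ := by nlinarith
    set r : ℝ := M / ((k₁:ℝ) * k₂) with hr
    have hr0 : 0 ≤ r := by
      rw [hr, hM]
      positivity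
    have hr1 : r ≤ 1 := by
      rw [hr, div_le_one hkk, hM]
      have := maxOcc_le hne a k₁ k₂
      calc (maxOcc X a k₁ k₂ : ℝ) ≤ ((k₁ * k₂ : ℕ) : ℝ) := by exact_mod_cast this
        _ = (k₁:ℝ) * k₂ := by push_cast; ring
    have hεbound : ∀ ε : ℝ, 0 < ε → limsup g atTop ≤ r + ε := by
      intro ε hε
      apply Filter.limsup_le_of_le hCobound
      obtain ⟨N₀, hN₀⟩ := exists_nat_ge (3 * ((k₁:ℝ) + k₂ + k₁*k₂) / ε)
      have hN₀pos : 1 ≤ N₀ := by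
        by_contra hcon
        push_neg at hcon
        interval_cases N₀
        · simp only [Nat.cast_zero] at hN₀
          have : (0:ℝ) < 3 * ((k₁:ℝ) + k₂ + k₁*k₂) / ε := by positivity
          linarith
      rw [Filter.eventually_atTop]
      refine ⟨(N₀, N₀), ?_⟩
      rintro ⟨n₁, n₂⟩ hb
      obtain ⟨hb1, hb2⟩ : N₀ ≤ n₁ ∧ N₀ ≤ n₂ := ⟨hb.1, hb.2⟩
      have hn₁1 : 1 ≤ n₁ := le_trans hN₀pos hb1
      have hn₂1 : 1 ≤ n₂ := le_trans hN₀pos hb2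
      have hn₁R : (1:ℝ) ≤ (n₁:ℝ) := by exact_mod_cast hn₁1
      have hn₂R : (1:ℝ) ≤ (n₂:ℝ) := by exact_mod_cast hn₂1
      have hεn₁ : 3 * ((k₁:ℝ) + k₂ + k₁*k₂) ≤ ε * n₁ := by
        have h1 : (N₀ : ℝ) ≤ (n₁ : ℝ) := by exact_mod_cast hb1
        have := (div_le_iff₀ hε).mp (le_trans hN₀ h1)
        linarith
      have hεn₂ : 3 * ((k₁:ℝ) + k₂ + k₁*k₂) ≤ ε * n₂ := by
        have h1 : (N₀ : ℝ) ≤ (n₂ : ℝ) := by exact_mod_cast hb2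
        have := (div_le_iff₀ hε).mp (le_trans hN₀ h1)
        linarith
      -- covering bound in ℕ
      have hq₁ : (n₁ / k₁ + 1) * k₁ ≤ n₁ + k₁ := by
        have h := Nat.div_mul_le_self n₁ k₁
        have he : (n₁ / k₁ + 1) * k₁ = n₁ / k₁ * k₁ + k₁ := by ring
        omega
      have hq₂ : (n₂ / k₂ + 1) * k₂ ≤ n₂ + k₂ := by
        have h := Nat.div_mul_le_self n₂ k₂
        have he : (n₂ / k₂ + 1) * k₂ = n₂ / k₂ * k₂ + k₂ := by ring
        omega
      have hcov := occCount_le_cover hX hxX hk₁ hk₂ n₁ n₂ (a := a)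
      have hN : occCount x a n₁ n₂ * (k₁ * k₂)
          ≤ maxOcc X a k₁ k₂ * ((n₁ + k₁) * (n₂ + k₂)) := by
        calc occCount x a n₁ n₂ * (k₁ * k₂)
            ≤ ((n₁ / k₁ + 1) * (n₂ / k₂ + 1) * maxOcc X a k₁ k₂) * (k₁ * k₂) :=
              Nat.mul_le_mul_right _ hcov
          _ = maxOcc X a k₁ k₂ * (((n₁ / k₁ + 1) * k₁) * ((n₂ / k₂ + 1) * k₂)) := by ring
          _ ≤ maxOcc X a k₁ k₂ * ((n₁ + k₁) * (n₂ + k₂)) :=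
              Nat.mul_le_mul_left _ (Nat.mul_le_mul hq₁ hq₂)
      have hNR : (occCount x a n₁ n₂ : ℝ) * ((k₁:ℝ) * k₂)
          ≤ M * (((n₁:ℝ) + k₁) * ((n₂:ℝ) + k₂)) := by
        rw [hM]
        exact_mod_cast hN
      have hoccr : (occCount x a n₁ n₂ : ℝ) ≤ r * (((n₁:ℝ) + k₁) * ((n₂:ℝ) + k₂)) := by
        rw [hr]
        rw [div_mul_eq_mul_div, le_div_iff₀ hkk]
        linarith [hNR]
      -- now the fraction bound
      have hB0 : (0:ℝ) ≤ (k₁:ℝ)*n₂ + (k₂:ℝ)*n₁ + (k₁:ℝ)*k₂ := by positivity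
      have e1 : (k₁:ℝ)*n₂ ≤ (ε*n₁/3)*n₂ := by
        apply mul_le_mul_of_nonneg_right _ (by linarith)
        linarith
      have e2 : (k₂:ℝ)*n₁ ≤ (ε*n₂/3)*n₁ := by
        apply mul_le_mul_of_nonneg_right _ (by linarith)
        linarith
      have e3 : (k₁:ℝ)*k₂ ≤ ε*n₁/3 := by nlinarith
      have e3' : ε*n₁/3 ≤ (ε*n₁/3)*n₂ := by
        apply le_mul_of_one_le_right _ hn₂R
        positivity
      have hBe : (k₁:ℝ)*n₂ + (k₂:ℝ)*n₁ + (k₁:ℝ)*k₂ ≤ ε * ((n₁:ℝ)*n₂) := by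
        have he1 : (ε*n₁/3)*n₂ = (1/3) * (ε * ((n₁:ℝ)*n₂)) := by ring
        have he2 : (ε*n₂/3)*n₁ = (1/3) * (ε * ((n₁:ℝ)*n₂)) := by ring
        rw [he1] at e1 e3'
        rw [he2] at e2
        linarith [e1, e2, le_trans e3 e3']
      have hfrac : r * (((n₁:ℝ) + k₁) * ((n₂:ℝ) + k₂)) ≤ (r + ε) * ((n₁:ℝ) * n₂) := by
        have hexp : r * (((n₁:ℝ) + k₁) * ((n₂:ℝ) + k₂))
            = r * ((n₁:ℝ)*n₂) + r * ((k₁:ℝ)*n₂ + (k₂:ℝ)*n₁ + (k₁:ℝ)*k₂) := by ring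
        have hrB : r * ((k₁:ℝ)*n₂ + (k₂:ℝ)*n₁ + (k₁:ℝ)*k₂)
            ≤ (k₁:ℝ)*n₂ + (k₂:ℝ)*n₁ + (k₁:ℝ)*k₂ := by
          nlinarith
        have hfin : (r + ε) * ((n₁:ℝ) * n₂) = r * ((n₁:ℝ)*n₂) + ε * ((n₁:ℝ)*n₂) := by ring
        linarith
      have hnn : (0:ℝ) < (n₁:ℝ) * n₂ := by nlinarith
      rw [hg]
      show (occCount x a n₁ n₂ : ℝ) / ((n₁:ℝ) * n₂) ≤ r + ε
      rw [div_le_iff₀ hnn]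
      linarith [hoccr, hfrac]
    by_contra hcon
    push_neg at hcon
    have hε : 0 < (limsup g atTop - r) / 2 := by linarith
    have := hεbound _ hε
    linarith
  -- lower bound
  have hge : c ≤ limsup g atTop := by
    have hstep : ∀ j : ℕ, 1 ≤ j → c - 1/(j:ℝ) ≤ limsup g atTop := by
      intro j hj
      apply Filter.le_limsup_of_frequently_le _ hBound
      rw [Filter.frequently_atTop]
      intro N
      set j' := max j (max N.1 N.2) with hj'
      have hjj' : j ≤ j' := le_max_left _ _
      have hj'1 : 1 ≤ j' := le_trans hj hjj'
      refine ⟨(sfun j', sfun j'), ?_, ?_⟩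
      · constructor
        · exact le_trans (le_trans (le_max_left _ _) (le_max_right j _)) (hs_ge j')
        · exact le_trans (le_trans (le_max_right _ _) (le_max_right j _)) (hs_ge j')
      · have hxj := hxprop j' hj'1
        have hsp : 1 ≤ sfun j' := hs_pos j'
        have hspR : (1:ℝ) ≤ ((sfun j' : ℕ):ℝ) := by exact_mod_cast hsp
        have hσpos : (0:ℝ) < ((sfun j' : ℕ):ℝ) * ((sfun j' : ℕ):ℝ) := by nlinarith
        have hdiv : c - 1/(j':ℝ) ≤ g (sfun j', sfun j') := by
          rw [hg]
          show c - 1/(j':ℝ) ≤ (occCount x a (sfun j') (sfun j') : ℝ)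
              / (((sfun j' : ℕ):ℝ) * ((sfun j' : ℕ):ℝ))
          rw [le_div_iff₀ hσpos]
          have he : ((sfun j' : ℕ):ℝ) * ((sfun j' : ℕ):ℝ) = ((sfun j' : ℕ):ℝ)^2 := by ring
          rw [he]
          exact hxj
        have hj'R : (j:ℝ) ≤ (j':ℝ) := by exact_mod_cast hjj'
        have hjpos : (0:ℝ) < (j:ℝ) := by exact_mod_cast hj
        have : 1/(j':ℝ) ≤ 1/(j:ℝ) := by
          apply one_div_le_one_div_of_le hjpos hj'R
        linarith
    by_contra hcon
    push_neg at hcon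
    obtain ⟨j, hjlt⟩ := exists_nat_one_div_lt (show 0 < c - limsup g atTop by linarith)
    have := hstep (j+1) (by omega)
    have hcast : (1:ℝ)/((j+1 : ℕ):ℝ) = 1/((j:ℝ)+1) := by push_cast; ring
    rw [hcast] at this
    linarith
  linarith [hle, hge]
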